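/- Let A be a separable C*-algebra, (aᵢ)ᵢ a dense sequence in A, and (γₙ : A → Bₙ)ₙ a cpc discrete asymptotic morphism with limsupₙ ‖γₙ(a)‖ = ‖a‖ for all a ∈ A. Then there exist, for each i, a strictly increasing sequence (m(i,n))ₙ such that the maps γ'ₙ = γ_{m(1,n)} ⊕ γ_{m(2,n)} ⊕ ⋯ ⊕ γ_{m(n,n)} : A → B_{m(1,n)} ⊕ ⋯ ⊕ B_{m(n,n)} form a cpc discrete asymptotic morphism satisfying limₙ ‖γ'ₙ(a)‖ = ‖a‖ for all a ∈ A (limit, not just limsup). -/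

import Mathlib

open Filter Topology

/-- Algebraic positivity of a matrix over a C*-algebra. -/
def MatPos {A : Type*} [NonUnitalCStarAlgebra A] {n : ℕ}
    (m : Matrix (Fin n) (Fin n) A) : Prop := ∃ c, m = star c * c

/-- A linear map between C*-algebras is completely positive if its matrix
amplifications preserve positivity. -/
def IsCompletelyPositive {A B : Type*} [NonUnitalCStarAlgebra A]
    [NonUnitalCStarAlgebra B] (φ : A →ₗ[ℂ] B) : Prop :=
  ∀ (n : ℕ) (m : Matrix (Fin n) (Fin n) A), MatPos m →
    MatPos (fun i j => φ (m i j) : Matrix (Fin n) (Fin n) B)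

/-- Let `A` be a separable C*-algebra, `(aᵢ)ᵢ` a dense sequence in `A`, and
`(γₙ : A → Bₙ)ₙ` a cpc discrete asymptotic morphism with
`limsupₙ ‖γₙ(a)‖ = ‖a‖` for all `a`.  Then there exist, for each `i`, a strictly
increasing sequence `(m i n)ₙ` such that the direct sums
`γ'ₙ = γ_{m 1 n} ⊕ ⋯ ⊕ γ_{m n n} : A → B_{m 1 n} ⊕ ⋯ ⊕ B_{m n n}` (the product
with the sup norm) form a cpc discrete asymptotic morphism with
`limₙ ‖γ'ₙ(a)‖ = ‖a‖` for all `a ∈ A`. -/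
theorem stmt_9 {A : Type*} {B : ℕ → Type*} [NonUnitalCStarAlgebra A]
    [∀ n, NonUnitalCStarAlgebra (B n)]
    (a : ℕ → A) (hdense : DenseRange a)
    (γ : ∀ n, A →ₗ[ℂ] B n)
    (hcp : ∀ n, IsCompletelyPositive (γ n))
    (hcontr : ∀ n x, ‖γ n x‖ ≤ ‖x‖)
    (hmult : ∀ x y : A,
      Tendsto (fun n => ‖γ n (x * y) - γ n x * γ n y‖) atTop (𝓝 0))
    (hinj : ∀ x : A, Filter.limsup (fun n => ‖γ n x‖) atTop = ‖x‖) :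
    ∃ m : ℕ → ℕ → ℕ, (∀ i, StrictMono (m i)) ∧
      ∃ γ' : ∀ n, A →ₗ[ℂ] (∀ i : Fin n, B (m i n)),
        (∀ n (x : A) (i : Fin n), γ' n x i = γ (m i n) x) ∧
        (∀ n, IsCompletelyPositive (γ' n)) ∧
        (∀ n x, ‖γ' n x‖ ≤ ‖x‖) ∧
        (∀ x y : A,
          Tendsto (fun n => ‖γ' n (x * y) - γ' n x * γ' n y‖) atTop (𝓝 0)) ∧
        (∀ x : A, Tendsto (fun n => ‖γ' n x‖) atTop (𝓝 ‖x‖)) := by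
  -- Step 1: for each i, extract a strictly increasing sequence m i with
  -- ‖γ (m i n) (a i)‖ > ‖a i‖ - 1/(n+1).
  have hfreq : ∀ i n : ℕ, ∃ᶠ k in atTop,
      ‖a i‖ - 1 / (n + 1 : ℝ) < ‖γ k (a i)‖ := by
    intro i n
    have hb : IsBoundedUnder (· ≥ ·) atTop (fun k => ‖γ k (a i)‖) :=
      Filter.isBoundedUnder_of ⟨0, fun k => norm_nonneg _⟩
    have hcb : IsCoboundedUnder (· ≤ ·) atTop (fun k => ‖γ k (a i)‖) :=
      hb.isCoboundedUnder_le
    refine Filter.frequently_lt_of_lt_limsup hcb ?_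
    rw [hinj]
    have : (0 : ℝ) < 1 / (n + 1 : ℝ) := by positivity
    linarith
  have hext : ∀ i, ∃ φ : ℕ → ℕ, StrictMono φ ∧
      ∀ n : ℕ, ‖a i‖ - 1 / ((n : ℝ) + 1) < ‖γ (φ n) (a i)‖ := fun i =>
    extraction_forall_of_frequently (hfreq i)
  choose m hmono hm using hext
  refine ⟨m, fun i => hmono i, fun n => LinearMap.pi (fun i : Fin n => γ (m i n)),
    fun n x i => rfl, ?_, ?_, ?_, ?_⟩
  · -- complete positivity
    intro n k M hM
    choose c hc using fun i : Fin n => hcp (m i n) k M hM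
    refine ⟨fun p q i => c i p q, ?_⟩
    funext p q
    funext i
    have := congrFun (congrFun (hc i) p) q
    simp only [LinearMap.pi_apply]
    rw [this]
    simp [Matrix.mul_apply, Matrix.star_apply]
    erw [Matrix.mul_apply, Finset.sum_apply]
    rfl
  · -- contractivity
    intro n x
    rw [pi_norm_le_iff_of_nonneg (norm_nonneg x)]
    intro i
    exact hcontr _ x
  · -- asymptotic multiplicativity
    intro x y
    rw [NormedAddCommGroup.tendsto_nhds_zero]
    intro ε hε
    have h2 : (0:ℝ) < ε / 2 := by linarith
    obtain ⟨N, hN⟩ := (Metric.tendsto_atTop.mp (hmult x y)) (ε/2) h2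
    filter_upwards [Filter.eventually_ge_atTop N] with n hn
    have hle : ‖(LinearMap.pi fun i : Fin n => γ (m i n)) (x * y) -
        (LinearMap.pi fun i : Fin n => γ (m i n)) x *
        (LinearMap.pi fun i : Fin n => γ (m i n)) y‖ ≤ ε / 2 := by
      rw [pi_norm_le_iff_of_nonneg (le_of_lt h2)]
      intro i
      have hmi : N ≤ m i n := le_trans hn ((hmono i).le_apply)
      have := hN (m i n) hmi
      rw [Real.dist_eq, sub_zero,
        abs_of_nonneg (norm_nonneg _)] at this
      simpa using this.le
    calc ‖_‖ = _ := Real.norm_of_nonneg (norm_nonneg _)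
      _ ≤ ε / 2 := hle
      _ < ε := by linarith
  · -- norm limit
    intro x
    rw [Metric.tendsto_atTop]
    intro ε hε
    have h4 : (0:ℝ) < ε / 4 := by linarith
    obtain ⟨i, hi⟩ := hdense.exists_dist_lt x h4
    rw [dist_eq_norm] at hi
    obtain ⟨N, hN⟩ := exists_nat_gt (2 / ε)
    refine ⟨max (i + 1) (N + 1), fun n hn => ?_⟩
    have hin : i < n := lt_of_lt_of_le (Nat.lt_succ_self i)
      (le_trans (le_max_left _ _) hn)
    have hNn : N + 1 ≤ n := le_trans (le_max_right _ _) hn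
    -- 1/(n+1) < ε/2
    have hNpos : (0:ℝ) < N + 1 := by positivity
    have hninv : 1 / ((n:ℝ) + 1) < ε / 2 := by
      have h2 : (N:ℝ) < (n:ℝ) + 1 := by
        have : N ≤ n := le_trans (Nat.le_succ N) hNn
        exact_mod_cast Nat.lt_succ_of_le this
      have hn1 : (2:ℝ)/ε < (n:ℝ) + 1 := lt_trans hN h2
      rw [div_lt_iff₀ (by positivity : (0:ℝ) < (n:ℝ)+1)]
      rw [div_lt_iff₀ hε] at hn1
      nlinarith
    set F := (LinearMap.pi fun j : Fin n => γ (m j n)) x with hF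
    have hub : ‖F‖ ≤ ‖x‖ := by
      rw [hF, pi_norm_le_iff_of_nonneg (norm_nonneg x)]
      intro j; exact hcontr _ x
    have hlb : ‖x‖ - ε < ‖F‖ := by
      have hcomp : ‖γ (m i n) x‖ ≤ ‖F‖ := by
        have := norm_le_pi_norm ((LinearMap.pi fun j : Fin n => γ (m j n)) x) ⟨i, hin⟩
        simpa [hF] using this
      have h1 : ‖a i‖ - 1 / ((n:ℝ) + 1) < ‖γ (m i n) (a i)‖ := hm i n
      have h2 : ‖γ (m i n) (a i)‖ - ‖γ (m i n) x‖ ≤ ‖x - a i‖ := by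
        have h3 : ‖γ (m i n) (a i)‖ - ‖γ (m i n) x‖ ≤ ‖γ (m i n) (a i) - γ (m i n) x‖ :=
          norm_sub_norm_le _ _
        have h4 : ‖γ (m i n) (a i) - γ (m i n) x‖ ≤ ‖a i - x‖ := by
          rw [← map_sub]; exact hcontr _ _
        have h6 : ‖a i - x‖ = ‖x - a i‖ := norm_sub_rev _ _
        linarith
      have h5 : ‖x‖ - ‖a i‖ ≤ ‖x - a i‖ := norm_sub_norm_le _ _
      have := hi
      linarith
    rw [Real.dist_eq, abs_of_nonpos (by linarith)]
    linarith
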